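/- Let ψ be a C² diffeomorphism of [0,1) fixing 0 and let φ be a C² diffeomorphism of [0,1) fixing 0 that commutes with ψ². Then φ commutes with ψ. -/

import Mathlib

open Set Filter Topology

/-! ### Generic helpers -/

lemma isClosed_fix {g : ℝ → ℝ} {s : Set ℝ} (hs : IsClosed s) (hg : ContinuousOn g s) :
    IsClosed {x | x ∈ s ∧ g x = x} := by
  apply IsSeqClosed.isClosed
  intro u x hu hux
  have hxs : x ∈ s := hs.isSeqClosed (fun n => (hu n).1) hux
  refine ⟨hxs, ?_⟩
  have h1 : Tendsto (fun n => g (u n)) atTop (𝓝 (g x)) :=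
    (hg x hxs).tendsto.comp
      (tendsto_nhdsWithin_of_tendsto_nhds_of_eventually_within _ hux
        (Eventually.of_forall fun n => (hu n).1))
  have h2 : (fun n => g (u n)) = u := funext fun n => (hu n).2
  rw [h2] at h1
  exact tendsto_nhds_unique h1 hux

lemma strictMonoOn_Ico01 {f : ℝ → ℝ} (hmaps : MapsTo f (Ico (0:ℝ) 1) (Ico (0:ℝ) 1))
    (hc : ContinuousOn f (Ico (0:ℝ) 1)) (hinj : InjOn f (Ico (0:ℝ) 1)) (h0 : f 0 = 0) :
    StrictMonoOn f (Ico (0:ℝ) 1) := by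
  intro x hx y hy hxy
  have hsub : Icc (0:ℝ) y ⊆ Ico (0:ℝ) 1 := fun t ht => ⟨ht.1, lt_of_le_of_lt ht.2 hy.2⟩
  have hfy : f 0 ≤ f y := by rw [h0]; exact (hmaps hy).1
  have hmono := ContinuousOn.strictMonoOn_of_injOn_Icc hy.1 hfy (hc.mono hsub) (hinj.mono hsub)
  exact hmono ⟨hx.1, hxy.le⟩ ⟨hy.1, le_rfl⟩ hxy

/-- Sign dichotomy for two continuous functions with no crossing on an open interval. -/
lemma forall_lt_or_forall_gt {F G : ℝ → ℝ} {s : Set ℝ} (hF : ContinuousOn F s)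
    (hG : ContinuousOn G s) {p q : ℝ} (hsub : Ioo p q ⊆ s)
    (hne : ∀ t ∈ Ioo p q, F t ≠ G t) :
    (∀ t ∈ Ioo p q, F t < G t) ∨ (∀ t ∈ Ioo p q, G t < F t) := by
  by_contra hcon
  push_neg at hcon
  obtain ⟨⟨t₁, ht₁, ht₁'⟩, ⟨t₂, ht₂, ht₂'⟩⟩ := hcon
  have h1 : G t₁ < F t₁ := lt_of_le_of_ne ht₁' (fun h => hne t₁ ht₁ h.symm)
  have h2 : F t₂ < G t₂ := lt_of_le_of_ne ht₂' (hne t₂ ht₂)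
  set D : ℝ → ℝ := fun t => F t - G t with hD
  have hDc : ContinuousOn D s := hF.sub hG
  rcases le_total t₁ t₂ with hle | hle
  · have hIcc : Icc t₁ t₂ ⊆ Ioo p q := fun t ht => ⟨lt_of_lt_of_le ht₁.1 ht.1,
      lt_of_le_of_lt ht.2 ht₂.2⟩
    have := intermediate_value_Icc' hle (hDc.mono (hIcc.trans hsub))
    have h0 : (0:ℝ) ∈ Icc (D t₂) (D t₁) := ⟨le_of_lt (by simp [hD]; linarith),
      le_of_lt (by simp [hD]; linarith)⟩
    obtain ⟨c, hc, hc0⟩ := this h0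
    exact hne c (hIcc hc) (by simpa [hD, sub_eq_zero] using hc0)
  · have hIcc : Icc t₂ t₁ ⊆ Ioo p q := fun t ht => ⟨lt_of_lt_of_le ht₂.1 ht.1,
      lt_of_le_of_lt ht.2 ht₁.2⟩
    have := intermediate_value_Icc hle (hDc.mono (hIcc.trans hsub))
    have h0 : (0:ℝ) ∈ Icc (D t₂) (D t₁) := ⟨le_of_lt (by simp [hD]; linarith),
      le_of_lt (by simp [hD]; linarith)⟩
    obtain ⟨c, hc, hc0⟩ := this h0
    exact hne c (hIcc hc) (by simpa [hD, sub_eq_zero] using hc0)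

/-- Iterates of a contracting-fixed-point map tend to the fixed endpoint. -/
lemma tendsto_iterate_fixed {a b : ℝ} (hab : a < b) {f : ℝ → ℝ}
    (hfS : MapsTo f (Ico a b) (Ico a b)) (hfc : ContinuousOn f (Ico a b))
    (hfa : f a = a) (hflt : ∀ x ∈ Ioo a b, f x < x) (hfm : StrictMonoOn f (Ico a b))
    {x : ℝ} (hx : x ∈ Ico a b) :
    Tendsto (fun n => f^[n] x) atTop (𝓝 a) := by
  have haS : a ∈ Ico a b := ⟨le_rfl, hab⟩
  have hmem : ∀ n, f^[n] x ∈ Icc a x := by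
    intro n
    induction n with
    | zero => exact ⟨hx.1, le_rfl⟩
    | succ n ih =>
      rw [Function.iterate_succ_apply']
      have hS : f^[n] x ∈ Ico a b := hfS.iterate n hx
      rcases eq_or_lt_of_le hS.1 with heq | hlt
      · rw [← heq, hfa]; exact ⟨le_rfl, le_trans (le_of_eq heq) ih.2⟩
      · constructor
        · have h := hfm haS hS hlt
          rw [hfa] at h
          exact h.le
        · exact le_trans (hflt _ ⟨hlt, hS.2⟩).le ih.2
  have hanti : Antitone fun n => f^[n] x := by
    apply antitone_nat_of_succ_le
    intro n
    rw [Function.iterate_succ_apply']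
    have hS : f^[n] x ∈ Ico a b := hfS.iterate n hx
    rcases eq_or_lt_of_le hS.1 with heq | hlt
    · rw [← heq, hfa]
    · exact (hflt _ ⟨hlt, hS.2⟩).le
  have hbdd : BddBelow (range fun n => f^[n] x) :=
    ⟨a, fun t ⟨n, hn⟩ => hn ▸ (hmem n).1⟩
  have htend : Tendsto (fun n => f^[n] x) atTop (𝓝 (⨅ n, f^[n] x)) :=
    tendsto_atTop_ciInf hanti hbdd
  set l := ⨅ n, f^[n] x with hl
  have hla : a ≤ l := le_ciInf fun n => (hmem n).1
  have hlx : l ≤ x := ciInf_le hbdd 0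
  have hlS : l ∈ Ico a b := ⟨hla, lt_of_le_of_lt hlx hx.2⟩
  have hfl : f l = l := by
    have h1 : Tendsto (fun n => f (f^[n] x)) atTop (𝓝 (f l)) :=
      (hfc l hlS).tendsto.comp
        (tendsto_nhdsWithin_of_tendsto_nhds_of_eventually_within _ htend
          (Eventually.of_forall fun n => hfS.iterate n hx))
    have h2 : Tendsto (fun n => f^[n+1] x) atTop (𝓝 l) := htend.comp (tendsto_add_atTop_nat 1)
    have h3 : (fun n => f (f^[n] x)) = fun n => f^[n+1] x := by
      funext n; rw [Function.iterate_succ_apply']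
    rw [h3] at h1
    exact tendsto_nhds_unique h1 h2
  have : l = a := by
    by_contra hne
    have hlI : l ∈ Ioo a b := ⟨lt_of_le_of_ne hla (Ne.symm hne), hlS.2⟩
    exact absurd hfl (ne_of_lt (hflt l hlI))
  rwa [this] at htend

/-- Derivative of an iterate within a set mapped to itself. -/
lemma hasDerivWithinAt_iterate {a b : ℝ} {f : ℝ → ℝ}
    (hfS : MapsTo f (Ico a b) (Ico a b)) (hfd : DifferentiableOn ℝ f (Ico a b))
    {x : ℝ} (hx : x ∈ Ico a b) (n : ℕ) :
    HasDerivWithinAt (f^[n])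
      (∏ k ∈ Finset.range n, derivWithin f (Ico a b) (f^[k] x)) (Ico a b) x := by
  induction n with
  | zero =>
    simp only [Function.iterate_zero, Finset.range_zero, Finset.prod_empty]
    exact hasDerivWithinAt_id x _
  | succ n ih =>
    rw [Function.iterate_succ']
    have hm : f^[n] x ∈ Ico a b := hfS.iterate n hx
    have := ((hfd _ hm).hasDerivWithinAt).comp x ih (hfS.iterate n)
    rw [Finset.prod_range_succ]
    rw [mul_comm]
    exact this

/-- A `C²` diffeomorphism of the half-open interval `[0,1)` fixing the endpoint `0`. -/
structure DiffeoIcoTwo where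
  toFun : ℝ → ℝ
  invFun : ℝ → ℝ
  mapsTo : Set.MapsTo toFun (Set.Ico (0:ℝ) 1) (Set.Ico (0:ℝ) 1)
  mapsTo_inv : Set.MapsTo invFun (Set.Ico (0:ℝ) 1) (Set.Ico (0:ℝ) 1)
  left_inv : ∀ x ∈ Set.Ico (0:ℝ) 1, invFun (toFun x) = x
  right_inv : ∀ x ∈ Set.Ico (0:ℝ) 1, toFun (invFun x) = x
  fixes_zero : toFun 0 = 0
  contDiff : ContDiffOn ℝ 2 toFun (Set.Ico (0:ℝ) 1)
  contDiff_inv : ContDiffOn ℝ 2 invFun (Set.Ico (0:ℝ) 1)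


/-! ### Kopell's lemma -/

theorem kopell {a b : ℝ} (hab : a < b) {f g : ℝ → ℝ}
    (hfS : MapsTo f (Ico a b) (Ico a b)) (hgS : MapsTo g (Ico a b) (Ico a b))
    (hf : ContDiffOn ℝ 2 f (Ico a b)) (hg : ContDiffOn ℝ 1 g (Ico a b))
    (hfa : f a = a) (hga : g a = a)
    (hflt : ∀ x ∈ Ioo a b, f x < x)
    (hfm : StrictMonoOn f (Ico a b)) (hgm : StrictMonoOn g (Ico a b))
    (hcomm : ∀ x ∈ Ico a b, g (f x) = f (g x))
    (hf'pos : ∀ x ∈ Ico a b, 0 < derivWithin f (Ico a b) x)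
    {z₀ : ℝ} (hz₀ : z₀ ∈ Ioo a b) (hgz₀ : g z₀ = z₀) :
    ∀ x ∈ Ico a b, g x = x := by
  have haS : a ∈ Ico a b := ⟨le_rfl, hab⟩
  have hUD : UniqueDiffOn ℝ (Ico a b) := uniqueDiffOn_Ico a b
  have hfd : DifferentiableOn ℝ f (Ico a b) := hf.differentiableOn two_ne_zero
  have hfc : ContinuousOn f (Ico a b) := hf.continuousOn
  have hgc : ContinuousOn g (Ico a b) := hg.continuousOn
  set F' := derivWithin f (Ico a b) with hF'
  -- the orbit of z₀
  set A : ℕ → ℝ := fun n => f^[n] z₀ with hA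
  have hA0 : A 0 = z₀ := rfl
  have hAsucc : ∀ n, A (n + 1) = f (A n) := fun n => Function.iterate_succ_apply' f n z₀
  have hAmem : ∀ n, A n ∈ Ioc a z₀ := by
    intro n
    induction n with
    | zero => exact ⟨hz₀.1, le_rfl⟩
    | succ n ih =>
      rw [hAsucc]
      have hAS : A n ∈ Ico a b := ⟨ih.1.le, lt_of_le_of_lt ih.2 hz₀.2⟩
      constructor
      · have h := hfm haS hAS ih.1
        rwa [hfa] at h
      · exact le_trans (hflt _ ⟨ih.1, hAS.2⟩).le ih.2
  have hAS : ∀ n, A n ∈ Ico a b := fun n => ⟨(hAmem n).1.le, lt_of_le_of_lt (hAmem n).2 hz₀.2⟩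
  have hAdec : ∀ n, A (n + 1) < A n := by
    intro n
    rw [hAsucc]
    exact hflt _ ⟨(hAmem n).1, (hAS n).2⟩
  have hIccA_sub : ∀ N, Icc (A (N + 1)) (A N) ⊆ Ico a b := fun N t ht =>
    ⟨le_trans (hAmem (N + 1)).1.le ht.1, lt_of_le_of_lt (le_trans ht.2 (hAmem N).2) hz₀.2⟩
  have hIccA_subI : ∀ N, Icc (A (N + 1)) (A N) ⊆ Icc a z₀ := fun N t ht =>
    ⟨le_trans (hAmem (N + 1)).1.le ht.1, le_trans ht.2 (hAmem N).2⟩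
  -- commutation for iterates of f
  have hcomm_iter : ∀ n, ∀ x ∈ Ico a b, g (f^[n] x) = f^[n] (g x) := by
    intro n
    induction n with
    | zero => intro x _; rfl
    | succ n ih =>
      intro x hx
      rw [Function.iterate_succ_apply', Function.iterate_succ_apply',
        hcomm _ (hfS.iterate n hx), ih x hx]
  have hAfix : ∀ n, g (A n) = A n := by
    intro n
    show g (f^[n] z₀) = f^[n] z₀
    rw [hcomm_iter n z₀ ⟨hz₀.1.le, hz₀.2⟩, hgz₀]
  have htendA : Tendsto A atTop (𝓝 a) :=
    tendsto_iterate_fixed hab hfS hfc hfa hflt hfm ⟨hz₀.1.le, hz₀.2⟩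
  -- constants
  have hIS : Icc a z₀ ⊆ Ico a b := fun t ht => ⟨ht.1, lt_of_le_of_lt ht.2 hz₀.2⟩
  have hF'cont : ContinuousOn F' (Ico a b) :=
    hf.continuousOn_derivWithin hUD one_le_two
  obtain ⟨xm, hxm, hxmin⟩ := isCompact_Icc.exists_isMinOn (⟨a, left_mem_Icc.2 hz₀.1.le⟩ :
    (Icc a z₀).Nonempty) (hF'cont.mono hIS)
  set m := F' xm with hm
  have hm0 : 0 < m := hf'pos xm (hIS hxm)
  have hmmin : ∀ u ∈ Icc a z₀, m ≤ F' u := fun u hu => hxmin hu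
  have hF'cd : ContDiffOn ℝ 1 F' (Ico a b) := hf.derivWithin hUD (by norm_num)
  set F'' := derivWithin F' (Ico a b) with hF''
  have hF''cont : ContinuousOn F'' (Ico a b) := hF'cd.continuousOn_derivWithin hUD le_rfl
  obtain ⟨K, hK⟩ := isCompact_Icc.exists_bound_of_continuousOn (hF''cont.mono hIS)
  have hK0 : 0 ≤ K := le_trans (norm_nonneg _) (hK a (left_mem_Icc.2 hz₀.1.le))
  -- Lipschitz bound for F' on Icc a z₀
  have hLip : ∀ u ∈ Icc a z₀, ∀ v ∈ Icc a z₀, |F' u - F' v| ≤ K * |u - v| := by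
    intro u hu v hv
    have := Convex.norm_image_sub_le_of_norm_hasDerivWithin_le
      (f := F') (f' := F'') (s := Icc a z₀)
      (fun x hx => ((hF'cd.differentiableOn one_ne_zero) x (hIS hx)).hasDerivWithinAt.mono hIS)
      (fun x hx => hK x hx) (convex_Icc a z₀) hv hu
    simpa [Real.norm_eq_abs] using this
  set L := K / m with hL
  have hL0 : 0 ≤ L := div_nonneg hK0 hm0.le
  -- multiplicative distortion of F'
  have hfac : ∀ u ∈ Icc a z₀, ∀ v ∈ Icc a z₀, ∀ d : ℝ, |u - v| ≤ d →
      F' u ≤ Real.exp (L * d) * F' v := by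
    intro u hu v hv d hd
    have h1 : F' u - F' v ≤ K * |u - v| := le_trans (le_abs_self _) (hLip u hu v hv)
    have h2 : m ≤ F' v := hmmin v hv
    have h3 : L * d + 1 ≤ Real.exp (L * d) := Real.add_one_le_exp _
    have h4 : K * |u - v| ≤ K * d := mul_le_mul_of_nonneg_left hd hK0
    have h5 : 0 ≤ d := le_trans (abs_nonneg _) hd
    have h6 : K * d ≤ F' v * (L * d) := by
      have hm' : m ≠ 0 := hm0.ne'
      have he : K * d = m * (L * d) := by rw [hL]; field_simp
      rw [he]
      exact mul_le_mul_of_nonneg_right h2 (mul_nonneg hL0 h5)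
    have h7 : 0 < F' v := lt_of_lt_of_le hm0 h2
    nlinarith [h3, h6, h1, h4, h7]
  -- fundamental domain images under iterates
  have hIter : ∀ N k, ∀ x ∈ Icc (A (N + 1)) (A N), f^[k] x ∈ Icc (A (N + k + 1)) (A (N + k)) := by
    intro N k
    induction k with
    | zero => intro x hx; simpa using hx
    | succ k ih =>
      intro x hx
      rw [Function.iterate_succ_apply']
      have hmem := ih x hx
      have hsub := hIccA_sub (N + k)
      constructor
      · have e1 : A (N + k + 1 + 1) = f (A (N + k + 1)) := hAsucc _
        show A (N + k + 1 + 1) ≤ f (f^[k] x)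
        rw [e1]
        exact hfm.monotoneOn (hAS _) (hsub hmem) hmem.1
      · have e2 : A (N + k + 1) = f (A (N + k)) := hAsucc _
        show f (f^[k] x) ≤ A (N + k + 1)
        rw [e2]
        exact hfm.monotoneOn (hsub hmem) (hAS _) hmem.2
  -- distortion of products
  set C := L * (z₀ - a) with hC
  have hC0 : 0 ≤ C := mul_nonneg hL0 (by linarith [hz₀.1])
  set ρ := Real.exp (-C) with hρ
  have hρ0 : 0 < ρ := Real.exp_pos _
  have hF'pos_iter : ∀ (x : ℝ), x ∈ Ico a b → ∀ n : ℕ,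
      0 < ∏ j ∈ Finset.range n, F' (f^[j] x) :=
    fun x hx n => Finset.prod_pos fun j _ => hf'pos _ (hfS.iterate j hx)
  have hdist : ∀ N n, ∀ x ∈ Icc (A (N + 1)) (A N), ∀ u ∈ Icc (A (N + 1)) (A N),
      (∏ j ∈ Finset.range n, F' (f^[j] u)) ≤
        Real.exp C * ∏ j ∈ Finset.range n, F' (f^[j] x) := by
    intro N n x hx u hu
    have hfacj : ∀ j ∈ Finset.range n,
        F' (f^[j] u) ≤ Real.exp (L * (A (N + j) - A (N + j + 1))) * F' (f^[j] x) := by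
      intro j _
      have hxj := hIter N j x hx
      have huj := hIter N j u hu
      have hsubI := hIccA_subI (N + j)
      have habs : |f^[j] u - f^[j] x| ≤ A (N + j) - A (N + j + 1) := by
        rw [abs_sub_le_iff]
        constructor <;> linarith [hxj.1, hxj.2, huj.1, huj.2]
      exact hfac _ (hsubI huj) _ (hsubI hxj) _ habs
    calc (∏ j ∈ Finset.range n, F' (f^[j] u))
        ≤ ∏ j ∈ Finset.range n,
            (Real.exp (L * (A (N + j) - A (N + j + 1))) * F' (f^[j] x)) := by
          apply Finset.prod_le_prod
          · intro j _; exact (hf'pos _ (hfS.iterate j (hIccA_sub N hu))).le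
          · exact hfacj
      _ = Real.exp (∑ j ∈ Finset.range n, L * (A (N + j) - A (N + j + 1))) *
            ∏ j ∈ Finset.range n, F' (f^[j] x) := by
          rw [Finset.prod_mul_distrib, Real.exp_sum]
      _ ≤ Real.exp C * ∏ j ∈ Finset.range n, F' (f^[j] x) := by
          apply mul_le_mul_of_nonneg_right _ (hF'pos_iter x (hIccA_sub N hx) n).le
          apply Real.exp_le_exp.2
          have hsum : ∑ j ∈ Finset.range n, L * (A (N + j) - A (N + j + 1)) =
              L * (A N - A (N + n)) := by
            rw [← Finset.mul_sum]
            congr 1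
            have := Finset.sum_range_sub' (f := fun j => A (N + j)) n
            simpa [show ∀ j, N + (j + 1) = N + j + 1 from fun j => by ring] using this
          rw [hsum, hC]
          apply mul_le_mul_of_nonneg_left _ hL0
          have h1 := (hAmem N).2
          have h2 := (hAmem (N + n)).1
          linarith
  -- key derivative lower bound for commuting C¹ maps fixing the orbit
  have hkey : ∀ h : ℝ → ℝ, MapsTo h (Ico a b) (Ico a b) → ContDiffOn ℝ 1 h (Ico a b) →
      (∀ x ∈ Ico a b, h (f x) = f (h x)) → (∀ n, h (A n) = A n) →
      StrictMonoOn h (Ico a b) →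
      ∀ N, ∀ x ∈ Icc (A (N + 1)) (A N), ρ ≤ derivWithin h (Ico a b) x := by
    intro h hhS hh hhcomm hhfix hhm N x hx
    have hhd : DifferentiableOn ℝ h (Ico a b) := hh.differentiableOn one_ne_zero
    have hha : h a = a := by
      -- h a is the limit of h (A n) = A n
      have h1 : Tendsto (fun n => h (A n)) atTop (𝓝 (h a)) :=
        (hh.continuousOn a haS).tendsto.comp
          (tendsto_nhdsWithin_of_tendsto_nhds_of_eventually_within _ htendA
            (Eventually.of_forall hAS))
      have h2 : (fun n => h (A n)) = A := funext hhfix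
      rw [h2] at h1
      exact tendsto_nhds_unique h1 htendA
    -- derivative of h at a equals 1
    have hd1 : derivWithin h (Ico a b) a = 1 := by
      have hder := (hhd a haS).hasDerivWithinAt
      rw [hasDerivWithinAt_iff_tendsto_slope] at hder
      have hseq : Tendsto A atTop (𝓝[(Ico a b) \ {a}] a) :=
        tendsto_nhdsWithin_of_tendsto_nhds_of_eventually_within _ htendA
          (Eventually.of_forall fun n => ⟨hAS n, ne_of_gt (hAmem n).1⟩)
      have hcompseq : Tendsto (fun n => slope h a (A n)) atTop (𝓝 (derivWithin h (Ico a b) a)) :=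
        hder.comp hseq
      have hconst : (fun n => slope h a (A n)) = fun _ => 1 := by
        funext n
        rw [slope_def_field, hhfix n, hha, div_self (sub_ne_zero.2 (ne_of_gt (hAmem n).1))]
      rw [hconst] at hcompseq
      exact tendsto_nhds_unique hcompseq tendsto_const_nhds
    -- continuity of the derivative of h at a
    have hxS : x ∈ Ico a b := hIccA_sub N hx
    have hcont' : ContinuousWithinAt (derivWithin h (Ico a b)) (Ico a b) a :=
      (hh.continuousOn_derivWithin hUD le_rfl) a haS
    have htendx : Tendsto (fun n => f^[n] x) atTop (𝓝 a) :=
      tendsto_iterate_fixed hab hfS hfc hfa hflt hfm hxS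
    have hval : Tendsto (fun n => derivWithin h (Ico a b) (f^[n] x)) atTop (𝓝 1) := by
      rw [← hd1]
      exact hcont'.tendsto.comp
        (tendsto_nhdsWithin_of_tendsto_nhds_of_eventually_within _ htendx
          (Eventually.of_forall fun n => hfS.iterate n hxS))
    -- commutation for iterates with h
    have hhcomm_iter : ∀ n, ∀ y ∈ Ico a b, h (f^[n] y) = f^[n] (h y) := by
      intro n
      induction n with
      | zero => intro y _; rfl
      | succ n ih =>
        intro y hy
        rw [Function.iterate_succ_apply', Function.iterate_succ_apply',
          hhcomm _ (hfS.iterate n hy), ih y hy]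
    -- h x stays in the fundamental domain
    have hhx : h x ∈ Icc (A (N + 1)) (A N) := by
      constructor
      · have := hhm.monotoneOn (hAS (N + 1)) hxS hx.1
        rwa [hhfix (N + 1)] at this
      · have := hhm.monotoneOn hxS (hAS N) hx.2
        rwa [hhfix N] at this
    -- the chain-rule identity
    have hident : ∀ n : ℕ, derivWithin h (Ico a b) (f^[n] x) *
        (∏ j ∈ Finset.range n, F' (f^[j] x)) =
        (∏ j ∈ Finset.range n, F' (f^[j] (h x))) * derivWithin h (Ico a b) x := by
      intro n
      have hD1 : HasDerivWithinAt (h ∘ f^[n])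
          (derivWithin h (Ico a b) (f^[n] x) * ∏ j ∈ Finset.range n, F' (f^[j] x))
          (Ico a b) x :=
        ((hhd _ (hfS.iterate n hxS)).hasDerivWithinAt).comp x
          (hasDerivWithinAt_iterate hfS hfd hxS n) (hfS.iterate n)
      have hD2 : HasDerivWithinAt (f^[n] ∘ h)
          ((∏ j ∈ Finset.range n, F' (f^[j] (h x))) * derivWithin h (Ico a b) x)
          (Ico a b) x :=
        (hasDerivWithinAt_iterate hfS hfd (hhS hxS) n).comp x
          ((hhd x hxS).hasDerivWithinAt) hhS
      have hEq : EqOn (h ∘ f^[n]) (f^[n] ∘ h) (Ico a b) := fun y hy => hhcomm_iter n y hy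
      have hD1' : HasDerivWithinAt (f^[n] ∘ h)
          (derivWithin h (Ico a b) (f^[n] x) * ∏ j ∈ Finset.range n, F' (f^[j] x))
          (Ico a b) x := hD1.congr (fun y hy => (hEq hy).symm) (hEq hxS).symm
      have e1 := hD1'.derivWithin (hUD x hxS)
      have e2 := hD2.derivWithin (hUD x hxS)
      rw [← e1, ← e2]
    -- eventually positive, and the limit bound
    have hev : ∀ᶠ n in atTop, 0 < derivWithin h (Ico a b) (f^[n] x) :=
      hval.eventually_const_lt (by norm_num)
    have hineq : ∀ᶠ n in atTop,
        ρ * derivWithin h (Ico a b) (f^[n] x) ≤ derivWithin h (Ico a b) x := by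
      filter_upwards [hev] with n hn
      have hPx := hF'pos_iter x hxS n
      have hPhx := hF'pos_iter (h x) (hhS hxS) n
      have hdd := hdist N n x hx (h x) hhx
      have hid := hident n
      -- ρ * Pₙ(h x) ≤ Pₙ x
      have h1 : ρ * (∏ j ∈ Finset.range n, F' (f^[j] (h x))) ≤
          ∏ j ∈ Finset.range n, F' (f^[j] x) := by
        rw [hρ]
        calc Real.exp (-C) * (∏ j ∈ Finset.range n, F' (f^[j] (h x)))
            ≤ Real.exp (-C) * (Real.exp C * ∏ j ∈ Finset.range n, F' (f^[j] x)) :=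
              mul_le_mul_of_nonneg_left hdd (Real.exp_pos _).le
          _ = ∏ j ∈ Finset.range n, F' (f^[j] x) := by
              rw [← mul_assoc, ← Real.exp_add]; simp
      -- conclude
      have h2 : ρ * derivWithin h (Ico a b) (f^[n] x) *
          (∏ j ∈ Finset.range n, F' (f^[j] (h x))) ≤
          derivWithin h (Ico a b) x * (∏ j ∈ Finset.range n, F' (f^[j] (h x))) := by
        calc ρ * derivWithin h (Ico a b) (f^[n] x) *
            (∏ j ∈ Finset.range n, F' (f^[j] (h x)))
            = derivWithin h (Ico a b) (f^[n] x) *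
              (ρ * ∏ j ∈ Finset.range n, F' (f^[j] (h x))) := by ring
          _ ≤ derivWithin h (Ico a b) (f^[n] x) *
              (∏ j ∈ Finset.range n, F' (f^[j] x)) :=
              mul_le_mul_of_nonneg_left h1 hn.le
          _ = (∏ j ∈ Finset.range n, F' (f^[j] (h x))) * derivWithin h (Ico a b) x := hid
          _ = derivWithin h (Ico a b) x * (∏ j ∈ Finset.range n, F' (f^[j] (h x))) := by ring
      exact le_of_mul_le_mul_right h2 hPhx
    have hlim : Tendsto (fun n => ρ * derivWithin h (Ico a b) (f^[n] x)) atTop (𝓝 ρ) := by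
      have := hval.const_mul ρ
      simpa using this
    exact le_of_tendsto hlim hineq
  -- iterates of g satisfy the hypotheses of hkey
  have hgiter_maps : ∀ M : ℕ, MapsTo (g^[M]) (Ico a b) (Ico a b) := fun M => hgS.iterate M
  have hgiter_cd : ∀ M : ℕ, ContDiffOn ℝ 1 (g^[M]) (Ico a b) := by
    intro M
    induction M with
    | zero => simpa using contDiffOn_id
    | succ M ih =>
      rw [Function.iterate_succ']
      exact hg.comp ih (hgiter_maps M)
  have hgiter_comm : ∀ M : ℕ, ∀ x ∈ Ico a b, g^[M] (f x) = f (g^[M] x) := by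
    intro M
    induction M with
    | zero => intro x _; rfl
    | succ M ih =>
      intro x hx
      rw [Function.iterate_succ_apply', Function.iterate_succ_apply', ih x hx,
        hcomm _ (hgiter_maps M hx)]
  have hgiter_fix : ∀ M n, g^[M] (A n) = A n := fun M n => Function.iterate_fixed (hAfix n) M
  have hgiter_mono : ∀ M, StrictMonoOn (g^[M]) (Ico a b) := by
    intro M
    induction M with
    | zero => simpa using strictMonoOn_id
    | succ M ih =>
      intro u hu v hv huv
      rw [Function.iterate_succ_apply', Function.iterate_succ_apply']
      exact hgm (hgiter_maps M hu) (hgiter_maps M hv) (ih hu hv huv)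
  -- growth bound from the derivative bound
  have hgrow : ∀ (M N : ℕ), ∀ p ∈ Icc (A (N+1)) (A N), ∀ q ∈ Icc (A (N+1)) (A N), p ≤ q →
      ρ * (q - p) ≤ g^[M] q - g^[M] p := by
    intro M N p hp q hq hpq
    have hDsub : Icc (A (N+1)) (A N) ⊆ Ico a b := hIccA_sub N
    have hbound := hkey (g^[M]) (hgiter_maps M) (hgiter_cd M) (hgiter_comm M)
      (fun n => hgiter_fix M n) (hgiter_mono M) N
    have hconts : ContinuousOn (g^[M]) (Icc (A (N+1)) (A N)) :=
      ((hgiter_cd M).continuousOn).mono hDsub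
    have hnbh : ∀ x ∈ Ioo (A (N+1)) (A N), Ico a b ∈ 𝓝 x := by
      intro x hx
      have h1 := (hAmem (N+1)).1
      have h2 := (hAmem N).2
      exact Ico_mem_nhds (by linarith [hx.1]) (by linarith [hx.2, hz₀.2])
    have hdiffi : DifferentiableOn ℝ (g^[M]) (interior (Icc (A (N+1)) (A N))) := by
      rw [interior_Icc]
      intro x hx
      have hxS : x ∈ Ico a b := hDsub (Ioo_subset_Icc_self hx)
      exact (((hgiter_cd M).differentiableOn one_ne_zero x hxS).differentiableAt
        (hnbh x hx)).differentiableWithinAt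
    have hder : ∀ x ∈ interior (Icc (A (N+1)) (A N)), ρ ≤ deriv (g^[M]) x := by
      rw [interior_Icc]
      intro x hx
      rw [← derivWithin_of_mem_nhds (hnbh x hx)]
      exact hbound x (Ioo_subset_Icc_self hx)
    exact (convex_Icc _ _).mul_sub_le_image_sub_of_le_deriv hconts hdiffi hder p hp q hq hpq
  -- final contradiction
  intro x hxS
  by_contra hgx
  have hxa : x ≠ a := fun h => hgx (by rw [h, hga])
  have hxI : x ∈ Ioo a b := ⟨lt_of_le_of_ne hxS.1 (Ne.symm hxa), hxS.2⟩
  have hfm_iter : ∀ n, StrictMonoOn (f^[n]) (Ico a b) := by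
    intro n
    induction n with
    | zero => simpa using strictMonoOn_id
    | succ n ih =>
      intro u hu v hv huv
      rw [Function.iterate_succ_apply', Function.iterate_succ_apply']
      exact hfm (hfS.iterate n hu) (hfS.iterate n hv) (ih hu hv huv)
  obtain ⟨w, hwI, hgw⟩ : ∃ w, w ∈ Ioc a z₀ ∧ g w ≠ w := by
    rcases le_or_gt x z₀ with hle | hlt
    · exact ⟨x, ⟨hxI.1, hle⟩, hgx⟩
    · have htendx : Tendsto (fun n => f^[n] x) atTop (𝓝 a) :=
        tendsto_iterate_fixed hab hfS hfc hfa hflt hfm hxS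
      obtain ⟨n, hn⟩ := (htendx.eventually_lt_const hz₀.1).exists
      refine ⟨f^[n] x, ⟨?_, hn.le⟩, ?_⟩
      · have h := (hfm_iter n) haS hxS hxI.1
        rwa [Function.iterate_fixed hfa n] at h
      · intro hcon
        have h : f^[n] (g x) = f^[n] x := by rw [← hcomm_iter n x hxS, hcon]
        exact hgx ((hfm_iter n).injOn (hgS hxS) hxS h)
  have hexN : ∃ n, A n < w := (htendA.eventually_lt_const hwI.1).exists
  have hNffind : A (Nat.find hexN) < w := Nat.find_spec hexN
  have hNf0 : Nat.find hexN ≠ 0 := by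
    intro h
    rw [h, hA0] at hNffind
    exact absurd hNffind (not_lt.2 hwI.2)
  obtain ⟨N, hNeq⟩ := Nat.exists_eq_succ_of_ne_zero hNf0
  have hwIcc : w ∈ Icc (A (N+1)) (A N) := by
    constructor
    · have h := hNffind.le
      rw [hNeq] at h
      exact h
    · by_contra hcon
      push_neg at hcon
      exact (Nat.find_min hexN (by omega)) hcon
  have hsubS : Icc (A (N+1)) (A N) ⊆ Ico a b := hIccA_sub N
  set Kp := {t | t ∈ Icc (A (N+1)) w ∧ g t = t} with hKp
  have hKpclosed : IsClosed Kp := isClosed_fix isClosed_Icc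
    (hgc.mono (fun t ht => hsubS ⟨ht.1, le_trans ht.2 hwIcc.2⟩))
  have hKpcompact : IsCompact Kp :=
    isCompact_Icc.of_isClosed_subset hKpclosed (fun t ht => ht.1)
  have hKpne : Kp.Nonempty := ⟨A (N+1), ⟨left_mem_Icc.2 hwIcc.1, hAfix (N+1)⟩⟩
  set p := sSup Kp with hpdef
  have hpmem : p ∈ Kp := hKpcompact.sSup_mem hKpne
  have hpfix : g p = p := hpmem.2
  have hpw : p < w := lt_of_le_of_ne hpmem.1.2 (fun h => hgw (h ▸ hpfix))
  set Kq := {t | t ∈ Icc w (A N) ∧ g t = t} with hKq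
  have hKqclosed : IsClosed Kq := isClosed_fix isClosed_Icc
    (hgc.mono (fun t ht => hsubS ⟨le_trans hwIcc.1 ht.1, ht.2⟩))
  have hKqcompact : IsCompact Kq :=
    isCompact_Icc.of_isClosed_subset hKqclosed (fun t ht => ht.1)
  have hKqne : Kq.Nonempty := ⟨A N, ⟨right_mem_Icc.2 hwIcc.2, hAfix N⟩⟩
  set q := sInf Kq with hqdef
  have hqmem : q ∈ Kq := hKqcompact.sInf_mem hKqne
  have hqfix : g q = q := hqmem.2
  have hwq : w < q := lt_of_le_of_ne hqmem.1.1 (fun h => hgw (by rw [h]; exact hqfix))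
  have hpq : p < q := lt_trans hpw hwq
  have hpIcc : p ∈ Icc (A (N+1)) (A N) := ⟨hpmem.1.1, le_trans hpmem.1.2 hwIcc.2⟩
  have hqIcc : q ∈ Icc (A (N+1)) (A N) := ⟨le_trans hwIcc.1 hqmem.1.1, hqmem.1.2⟩
  have hIoopq : Ioo p q ⊆ Icc (A (N+1)) (A N) := fun t ht =>
    ⟨le_trans hpIcc.1 ht.1.le, le_trans ht.2.le hqIcc.2⟩
  have hIoopqS : Ioo p q ⊆ Ico a b := fun t ht => hsubS (hIoopq ht)
  have hnofix : ∀ t ∈ Ioo p q, g t ≠ t := by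
    intro t ht hfix
    rcases le_total t w with hle | hle
    · have htKp : t ∈ Kp := ⟨⟨le_trans hpIcc.1 ht.1.le, hle⟩, hfix⟩
      exact absurd (le_csSup hKpcompact.bddAbove htKp) (not_le.2 ht.1)
    · have htKq : t ∈ Kq := ⟨⟨hle, le_trans ht.2.le hqIcc.2⟩, hfix⟩
      exact absurd (csInf_le hKqcompact.bddBelow htKq) (not_le.2 ht.2)
  have hsign := forall_lt_or_forall_gt (F := g) (G := fun t => t) hgc continuousOn_id
    hIoopqS hnofix
  rcases hsign with hlt2 | hgt2
  · -- g < id on (p,q) : iterates of w decrease to p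
    have hstep : ∀ t ∈ Ioc p w, g t ∈ Ioc p w ∧ g t < t := by
      intro t ht
      have htI : t ∈ Ioo p q := ⟨ht.1, lt_of_le_of_lt ht.2 hwq⟩
      have h1 : g t < t := hlt2 t htI
      refine ⟨⟨?_, le_trans h1.le ht.2⟩, h1⟩
      have h2 := hgm (hsubS hpIcc) (hIoopqS htI) ht.1
      rwa [hpfix] at h2
    have humem : ∀ M, g^[M] w ∈ Ioc p w := by
      intro M
      induction M with
      | zero => exact ⟨hpw, le_rfl⟩
      | succ M ih => rw [Function.iterate_succ_apply']; exact (hstep _ ih).1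
    have humemS : ∀ M, g^[M] w ∈ Ico a b := fun M =>
      hIoopqS ⟨(humem M).1, lt_of_le_of_lt (humem M).2 hwq⟩
    have huanti : Antitone fun M => g^[M] w :=
      antitone_nat_of_succ_le fun M => by
        rw [Function.iterate_succ_apply']; exact (hstep _ (humem M)).2.le
    have hubdd : BddBelow (range fun M => g^[M] w) :=
      ⟨p, fun t ⟨M, hM⟩ => hM ▸ (humem M).1.le⟩
    have hutend : Tendsto (fun M => g^[M] w) atTop (𝓝 (⨅ M, g^[M] w)) :=
      tendsto_atTop_ciInf huanti hubdd
    set l := ⨅ M, g^[M] w with hls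
    have hlw : l ≤ w := ciInf_le hubdd 0
    have hpl : p ≤ l := le_ciInf fun M => (humem M).1.le
    have hlS : l ∈ Ico a b :=
      ⟨le_trans (hsubS hpIcc).1 hpl, lt_of_le_of_lt (le_trans hlw hwI.2) hz₀.2⟩
    have hgl : g l = l := by
      have h1 : Tendsto (fun M => g (g^[M] w)) atTop (𝓝 (g l)) :=
        (hgc l hlS).tendsto.comp
          (tendsto_nhdsWithin_of_tendsto_nhds_of_eventually_within _ hutend
            (Eventually.of_forall humemS))
      have h2 : Tendsto (fun M => g^[M+1] w) atTop (𝓝 l) := hutend.comp (tendsto_add_atTop_nat 1)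
      have h3 : (fun M => g (g^[M] w)) = fun M => g^[M+1] w :=
        funext fun M => (Function.iterate_succ_apply' g M w).symm
      rw [h3] at h1
      exact tendsto_nhds_unique h1 h2
    have hlp : l = p := by
      rcases eq_or_lt_of_le hpl with h | h
      · exact h.symm
      · exact absurd hgl (ne_of_lt (hlt2 l ⟨h, lt_of_le_of_lt hlw hwq⟩))
    have hfin : ∀ M, ρ * (w - p) ≤ g^[M] w - p := by
      intro M
      have h1 := hgrow M N p hpIcc w hwIcc hpw.le
      rwa [Function.iterate_fixed hpfix M] at h1
    have h2 : Tendsto (fun M => g^[M] w - p) atTop (𝓝 0) := by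
      have h3 := hutend.sub (tendsto_const_nhds (x := p))
      rw [hlp] at h3
      simpa using h3
    have h4 := ge_of_tendsto h2 (Eventually.of_forall hfin)
    have h5 : 0 < ρ * (w - p) := mul_pos hρ0 (by linarith)
    linarith
  · -- g > id on (p,q) : iterates of w increase to q
    have hstep : ∀ t ∈ Ico w q, g t ∈ Ico w q ∧ t < g t := by
      intro t ht
      have htI : t ∈ Ioo p q := ⟨lt_of_lt_of_le hpw ht.1, ht.2⟩
      have h1 : t < g t := hgt2 t htI
      refine ⟨⟨le_trans ht.1 h1.le, ?_⟩, h1⟩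
      have h2 := hgm (hIoopqS htI) (hsubS hqIcc) htI.2
      rwa [hqfix] at h2
    have humem : ∀ M, g^[M] w ∈ Ico w q := by
      intro M
      induction M with
      | zero => exact ⟨le_rfl, hwq⟩
      | succ M ih => rw [Function.iterate_succ_apply']; exact (hstep _ ih).1
    have humemS : ∀ M, g^[M] w ∈ Ico a b := fun M =>
      hIoopqS ⟨lt_of_lt_of_le hpw (humem M).1, (humem M).2⟩
    have humono : Monotone fun M => g^[M] w :=
      monotone_nat_of_le_succ fun M => by
        rw [Function.iterate_succ_apply']; exact (hstep _ (humem M)).2.le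
    have hubdd : BddAbove (range fun M => g^[M] w) :=
      ⟨q, fun t ⟨M, hM⟩ => hM ▸ (humem M).2.le⟩
    have hutend : Tendsto (fun M => g^[M] w) atTop (𝓝 (⨆ M, g^[M] w)) :=
      tendsto_atTop_ciSup humono hubdd
    set l := ⨆ M, g^[M] w with hls
    have hwl : w ≤ l := le_ciSup hubdd 0
    have hlq : l ≤ q := ciSup_le fun M => (humem M).2.le
    have hlS : l ∈ Ico a b :=
      ⟨le_trans (hsubS hwIcc).1 hwl,
        lt_of_le_of_lt (le_trans hlq (le_trans hqIcc.2 (hAmem N).2)) hz₀.2⟩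
    have hgl : g l = l := by
      have h1 : Tendsto (fun M => g (g^[M] w)) atTop (𝓝 (g l)) :=
        (hgc l hlS).tendsto.comp
          (tendsto_nhdsWithin_of_tendsto_nhds_of_eventually_within _ hutend
            (Eventually.of_forall humemS))
      have h2 : Tendsto (fun M => g^[M+1] w) atTop (𝓝 l) := hutend.comp (tendsto_add_atTop_nat 1)
      have h3 : (fun M => g (g^[M] w)) = fun M => g^[M+1] w :=
        funext fun M => (Function.iterate_succ_apply' g M w).symm
      rw [h3] at h1
      exact tendsto_nhds_unique h1 h2
    have hlq' : l = q := by
      rcases eq_or_lt_of_le hlq with h | h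
      · exact h
      · exact absurd hgl (ne_of_gt (hgt2 l ⟨lt_of_lt_of_le hpw hwl, h⟩))
    have hfin : ∀ M, ρ * (q - w) ≤ q - g^[M] w := by
      intro M
      have h1 := hgrow M N w hwIcc q hqIcc hwq.le
      rwa [Function.iterate_fixed hqfix M] at h1
    have h2 : Tendsto (fun M => q - g^[M] w) atTop (𝓝 0) := by
      have h3 := (tendsto_const_nhds (x := q)).sub hutend
      rw [hlq'] at h3
      simpa using h3
    have h4 := ge_of_tendsto h2 (Eventually.of_forall hfin)
    have h5 : 0 < ρ * (q - w) := mul_pos hρ0 (by linarith)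
    linarith

/-! ### Positivity of the derivative of a monotone map with a left inverse -/

lemma derivWithin_pos_of_leftInv {a b : ℝ} (hab : a < b) {f e : ℝ → ℝ}
    (hfS : MapsTo f (Ico a b) (Ico a b))
    (hfd : DifferentiableOn ℝ f (Ico a b)) (hed : DifferentiableOn ℝ e (Ico a b))
    (hef : ∀ x ∈ Ico a b, e (f x) = x)
    (hmono : StrictMonoOn f (Ico a b)) :
    ∀ x ∈ Ico a b, 0 < derivWithin f (Ico a b) x := by
  intro x hx
  have hUD := uniqueDiffOn_Ico a b
  have hcomp : HasDerivWithinAt (e ∘ f)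
      (derivWithin e (Ico a b) (f x) * derivWithin f (Ico a b) x) (Ico a b) x :=
    ((hed _ (hfS hx)).hasDerivWithinAt).comp x ((hfd x hx).hasDerivWithinAt) hfS
  have hid : HasDerivWithinAt (e ∘ f) 1 (Ico a b) x :=
    (hasDerivWithinAt_id x (Ico a b)).congr (fun y hy => hef y hy) (hef x hx)
  have heq : derivWithin e (Ico a b) (f x) * derivWithin f (Ico a b) x = 1 :=
    (hcomp.derivWithin (hUD x hx)).symm.trans (hid.derivWithin (hUD x hx))
  -- nonnegativity from monotonicity, via slopes from the right
  have hIoo : Ioo x b ⊆ Ico a b := fun t ht => ⟨le_trans hx.1 ht.1.le, ht.2⟩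
  have hder : HasDerivWithinAt f (derivWithin f (Ico a b) x) (Ioo x b) x :=
    ((hfd x hx).hasDerivWithinAt).mono hIoo
  have hxnot : x ∉ Ioo x b := fun h => lt_irrefl x h.1
  rw [hasDerivWithinAt_iff_tendsto_slope' hxnot] at hder
  have hNB : (𝓝[Ioo x b] x).NeBot := left_nhdsWithin_Ioo_neBot hx.2
  have hnonneg : 0 ≤ derivWithin f (Ico a b) x := by
    apply ge_of_tendsto hder
    filter_upwards [self_mem_nhdsWithin] with y hy
    rw [slope_def_field]
    apply div_nonneg
    · have := hmono hx (hIoo hy) hy.1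
      linarith
    · linarith [hy.1]
  rcases eq_or_lt_of_le hnonneg with h | h
  · exfalso; rw [← h, mul_zero] at heq; exact one_ne_zero heq.symm
  · exact h

/-! ### DiffeoIcoTwo helpers -/

namespace DiffeoIcoTwo

lemma inv_fixes_zero (D : DiffeoIcoTwo) : D.invFun 0 = 0 := by
  have h := D.left_inv 0 ⟨le_rfl, one_pos⟩
  rwa [D.fixes_zero] at h

lemma injOn (D : DiffeoIcoTwo) : InjOn D.toFun (Ico 0 1) := fun x hx y hy h => by
  rw [← D.left_inv x hx, h, D.left_inv y hy]

lemma injOn_inv (D : DiffeoIcoTwo) : InjOn D.invFun (Ico 0 1) := fun x hx y hy h => by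
  rw [← D.right_inv x hx, h, D.right_inv y hy]

lemma mono (D : DiffeoIcoTwo) : StrictMonoOn D.toFun (Ico 0 1) :=
  strictMonoOn_Ico01 D.mapsTo D.contDiff.continuousOn D.injOn D.fixes_zero

lemma mono_inv (D : DiffeoIcoTwo) : StrictMonoOn D.invFun (Ico 0 1) :=
  strictMonoOn_Ico01 D.mapsTo_inv D.contDiff_inv.continuousOn D.injOn_inv D.inv_fixes_zero

/-- A fixed point of the square is a fixed point. -/
lemma fix_of_fix_sq (D : DiffeoIcoTwo) {t : ℝ} (ht : t ∈ Ico (0:ℝ) 1)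
    (h : D.toFun (D.toFun t) = t) : D.toFun t = t := by
  rcases lt_trichotomy (D.toFun t) t with hlt | heq | hgt
  · exfalso
    have := D.mono (D.mapsTo ht) ht hlt
    linarith [h ▸ this]
  · exact heq
  · exfalso
    have := D.mono ht (D.mapsTo ht) hgt
    linarith [h ▸ this]

end DiffeoIcoTwo

/-! ### Uniqueness of square roots -/

lemma sq_unique (ψ χ : DiffeoIcoTwo)
    (hsq : ∀ x ∈ Ico (0:ℝ) 1, χ.toFun (χ.toFun x) = ψ.toFun (ψ.toFun x)) :
    ∀ y ∈ Ico (0:ℝ) 1, χ.toFun y = ψ.toFun y := by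
  have hfixiff : ∀ t ∈ Ico (0:ℝ) 1, (χ.toFun t = t ↔ ψ.toFun t = t) := by
    intro t ht
    constructor
    · intro h
      apply ψ.fix_of_fix_sq ht
      rw [← hsq t ht, h, h]
    · intro h
      apply χ.fix_of_fix_sq ht
      rw [hsq t ht, h, h]
  have hkeyχ : ∀ u ∈ Ico (0:ℝ) 1,
      χ.toFun (ψ.toFun (ψ.toFun u)) = ψ.toFun (ψ.toFun (χ.toFun u)) := by
    intro u hu
    rw [← hsq u hu]
    exact hsq (χ.toFun u) (χ.mapsTo hu)
  intro y hy
  by_cases hyfix : ψ.toFun y = y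
  · rw [hyfix, (hfixiff y hy).2 hyfix]
  have hy1 : y < 1 := hy.2
  have hy0 : (0:ℝ) ≤ y := hy.1
  -- left endpoint of the component
  set Ka := {t | t ∈ Icc (0:ℝ) y ∧ ψ.toFun t = t} with hKa
  have hKasub : Icc (0:ℝ) y ⊆ Ico (0:ℝ) 1 := fun t ht => ⟨ht.1, lt_of_le_of_lt ht.2 hy1⟩
  have hKaclosed : IsClosed Ka :=
    isClosed_fix isClosed_Icc (ψ.contDiff.continuousOn.mono hKasub)
  have hKacompact : IsCompact Ka :=
    isCompact_Icc.of_isClosed_subset hKaclosed fun t ht => ht.1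
  have hKane : Ka.Nonempty := ⟨0, ⟨left_mem_Icc.2 hy0, ψ.fixes_zero⟩⟩
  set a := sSup Ka with ha
  have hamem : a ∈ Ka := hKacompact.sSup_mem hKane
  have hafix : ψ.toFun a = a := hamem.2
  have ha0 : (0:ℝ) ≤ a := hamem.1.1
  have hay : a < y := lt_of_le_of_ne hamem.1.2 fun h => hyfix (h ▸ hafix)
  have haS : a ∈ Ico (0:ℝ) 1 := hKasub hamem.1
  -- right endpoint of the component
  set Sb := {t | t ∈ Icc y 1 ∧ (t = 1 ∨ ψ.toFun t = t)} with hSb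
  have hSbne : Sb.Nonempty := ⟨1, ⟨right_mem_Icc.2 hy1.le, Or.inl rfl⟩⟩
  have hSbbdd : BddBelow Sb := ⟨y, fun t ht => ht.1.1⟩
  set b := sInf Sb with hb
  have hby : y ≤ b := le_csInf hSbne fun t ht => ht.1.1
  have hb1 : b ≤ 1 := csInf_le hSbbdd ⟨right_mem_Icc.2 hy1.le, Or.inl rfl⟩
  have hbmem : b = 1 ∨ ψ.toFun b = b := by
    by_cases hbeq : b = 1
    · exact Or.inl hbeq
    right
    have hblt : b < 1 := lt_of_le_of_ne hb1 hbeq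
    have hseq : ∀ n : ℕ, ∃ t ∈ Sb, t < b + 1/((n:ℝ)+1) := fun n =>
      Real.lt_sInf_add_pos hSbne (by positivity)
    choose t htS htlt using hseq
    have htge : ∀ n, b ≤ t n := fun n => csInf_le hSbbdd (htS n)
    have hlim : Tendsto (fun n : ℕ => b + 1/((n:ℝ)+1)) atTop (𝓝 b) := by
      have h := tendsto_one_div_add_atTop_nhds_zero_nat (𝕜 := ℝ)
      simpa using (tendsto_const_nhds (x := b)).add h
    have htt : Tendsto t atTop (𝓝 b) :=
      tendsto_of_tendsto_of_tendsto_of_le_of_le tendsto_const_nhds hlim htge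
        fun n => (htlt n).le
    have hev1 : ∀ᶠ n in atTop, t n < 1 := by
      filter_upwards [hlim.eventually_lt_const hblt] with n hn
      exact lt_trans (htlt n) hn
    have hevfix : ∀ᶠ n in atTop, ψ.toFun (t n) = t n := by
      filter_upwards [hev1] with n hn
      rcases (htS n).2 with h | h
      · exact absurd h (ne_of_lt hn)
      · exact h
    have hbS : b ∈ Ico (0:ℝ) 1 := ⟨le_trans hy0 hby, hblt⟩
    have h1 : Tendsto (fun n => ψ.toFun (t n)) atTop (𝓝 (ψ.toFun b)) := by
      apply (ψ.contDiff.continuousOn b hbS).tendsto.comp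
      apply tendsto_nhdsWithin_of_tendsto_nhds_of_eventually_within _ htt
      filter_upwards [hev1] with n hn
      exact ⟨le_trans hy0 (le_trans hby (htge n)), hn⟩
    have h2 : Tendsto (fun n => ψ.toFun (t n)) atTop (𝓝 b) :=
      htt.congr' (hevfix.mono fun n h => h.symm)
    exact tendsto_nhds_unique h1 h2
  have hyb : y < b := by
    rcases eq_or_lt_of_le hby with h | h
    · exfalso
      rcases hbmem with h1 | h1
      · rw [← h] at h1; exact absurd h1 (ne_of_lt hy1)
      · rw [← h] at h1; exact hyfix h1
    · exact h
  have hab : a < b := lt_trans hay hyb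
  have hIcoS : Ico a b ⊆ Ico (0:ℝ) 1 := fun t ht =>
    ⟨le_trans ha0 ht.1, lt_of_lt_of_le ht.2 hb1⟩
  have hIooS : Ioo a b ⊆ Ico (0:ℝ) 1 := fun t ht => hIcoS (Ioo_subset_Ico_self ht)
  have hbfix : b < 1 → ψ.toFun b = b := fun h => hbmem.resolve_left (ne_of_lt h)
  have hnofix : ∀ t ∈ Ioo a b, ψ.toFun t ≠ t := by
    intro t ht hfix
    rcases le_or_gt t y with hle | hlt
    · have h : t ∈ Ka := ⟨⟨le_trans ha0 ht.1.le, hle⟩, hfix⟩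
      exact absurd (le_csSup hKacompact.bddAbove h) (not_le.2 ht.1)
    · have h : t ∈ Sb := ⟨⟨hlt.le, (lt_of_lt_of_le ht.2 hb1).le⟩, Or.inr hfix⟩
      exact absurd (csInf_le hSbbdd h) (not_le.2 ht.2)
  have hχa : χ.toFun a = a := (hfixiff a haS).2 hafix
  have hχb : b < 1 → χ.toFun b = b := fun h =>
    (hfixiff b ⟨le_trans ha0 hab.le, h⟩).2 (hbfix h)
  have hψinva : ψ.invFun a = a := by
    have h := ψ.left_inv a haS
    rwa [hafix] at h
  have hψinvb : b < 1 → ψ.invFun b = b := by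
    intro h
    have h1 := ψ.left_inv b ⟨le_trans ha0 hab.le, h⟩
    rwa [hbfix h] at h1
  -- maps of the open component into itself
  have hmapsIoo : ∀ F : ℝ → ℝ, StrictMonoOn F (Ico 0 1) → MapsTo F (Ico 0 1) (Ico 0 1) →
      F a = a → (b < 1 → F b = b) → MapsTo F (Ioo a b) (Ioo a b) := by
    intro F hFm hFS hFa hFb t ht
    have htS : t ∈ Ico (0:ℝ) 1 := hIooS ht
    constructor
    · have h := hFm haS htS ht.1
      rwa [hFa] at h
    · rcases eq_or_lt_of_le hb1 with h | h
      · rw [h]; exact (hFS htS).2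
      · have hbS : b ∈ Ico (0:ℝ) 1 := ⟨le_trans ha0 hab.le, h⟩
        have h2 := hFm htS hbS ht.2
        rwa [hFb h] at h2
  have hψmapsIoo := hmapsIoo ψ.toFun ψ.mono ψ.mapsTo hafix hbfix
  have hχmapsIoo := hmapsIoo χ.toFun χ.mono χ.mapsTo hχa hχb
  have hψinvmapsIoo := hmapsIoo ψ.invFun ψ.mono_inv ψ.mapsTo_inv hψinva hψinvb
  have hmapsIco : ∀ F : ℝ → ℝ, MapsTo F (Ioo a b) (Ioo a b) → F a = a →
      MapsTo F (Ico a b) (Ico a b) := by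
    intro F hF hFa t ht
    rcases eq_or_lt_of_le ht.1 with h | h
    · rw [← h, hFa]; exact ⟨le_rfl, hab⟩
    · exact Ioo_subset_Ico_self (hF ⟨h, ht.2⟩)
  -- crossing point of χ and ψ in the component
  have hcross : ∃ x₀ ∈ Ioo a b, χ.toFun x₀ = ψ.toFun x₀ := by
    by_contra hcon
    push_neg at hcon
    have hsign := forall_lt_or_forall_gt (F := χ.toFun) (G := ψ.toFun)
      χ.contDiff.continuousOn ψ.contDiff.continuousOn hIooS hcon
    have hyI : y ∈ Ioo a b := ⟨hay, hyb⟩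
    rcases hsign with h | h
    · have h1 : χ.toFun y < ψ.toFun y := h y hyI
      have hχy : χ.toFun y ∈ Ioo a b := hχmapsIoo hyI
      have h2 : χ.toFun (χ.toFun y) < ψ.toFun (χ.toFun y) := h _ hχy
      have h3 : ψ.toFun (χ.toFun y) < ψ.toFun (ψ.toFun y) :=
        ψ.mono (hIooS hχy) (ψ.mapsTo (hIooS hyI)) h1
      have h4 := hsq y (hIooS hyI)
      linarith
    · have h1 : ψ.toFun y < χ.toFun y := h y hyI
      have hχy : χ.toFun y ∈ Ioo a b := hχmapsIoo hyI
      have h2 : ψ.toFun (χ.toFun y) < χ.toFun (χ.toFun y) := h _ hχy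
      have h3 : ψ.toFun (ψ.toFun y) < ψ.toFun (χ.toFun y) :=
        ψ.mono (ψ.mapsTo (hIooS hyI)) (hIooS hχy) h1
      have h4 := hsq y (hIooS hyI)
      linarith
  obtain ⟨x₀, hx₀I, hx₀eq⟩ := hcross
  have hz₁I : ψ.toFun x₀ ∈ Ioo a b := hψmapsIoo hx₀I
  -- the candidate commuting map g₀ = χ ∘ ψ⁻¹
  set g₀ := fun t => χ.toFun (ψ.invFun t) with hg₀
  have hg₀z : g₀ (ψ.toFun x₀) = ψ.toFun x₀ := by
    show χ.toFun (ψ.invFun (ψ.toFun x₀)) = ψ.toFun x₀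
    rw [ψ.left_inv x₀ (hIooS hx₀I), hx₀eq]
  have hg₀a : g₀ a = a := by
    show χ.toFun (ψ.invFun a) = a
    rw [hψinva, hχa]
  have hg₀mapsIoo : MapsTo g₀ (Ioo a b) (Ioo a b) := fun t ht =>
    hχmapsIoo (hψinvmapsIoo ht)
  have hg₀maps : MapsTo g₀ (Ico a b) (Ico a b) := hmapsIco _ hg₀mapsIoo hg₀a
  have hg₀mono : StrictMonoOn g₀ (Ico a b) := fun u hu v hv huv =>
    χ.mono (ψ.mapsTo_inv (hIcoS hu)) (ψ.mapsTo_inv (hIcoS hv))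
      (ψ.mono_inv (hIcoS hu) (hIcoS hv) huv)
  have hg₀cd : ContDiffOn ℝ 1 g₀ (Ico a b) :=
    (χ.contDiff.of_le one_le_two).comp ((ψ.contDiff_inv.of_le one_le_two).mono hIcoS)
      fun t ht => ψ.mapsTo_inv (hIcoS ht)
  -- sign of ψ on the component
  have hψsign := forall_lt_or_forall_gt (F := ψ.toFun) (G := fun t => t)
    ψ.contDiff.continuousOn continuousOn_id hIooS hnofix
  rcases hψsign with hψlt | hψgt
  · -- ψ < id on the component : f = ψ²
    set f := fun t => ψ.toFun (ψ.toFun t) with hf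
    have hfa : f a = a := by show ψ.toFun (ψ.toFun a) = a; rw [hafix, hafix]
    have hfmapsIoo : MapsTo f (Ioo a b) (Ioo a b) := fun t ht => hψmapsIoo (hψmapsIoo ht)
    have hfmaps : MapsTo f (Ico a b) (Ico a b) := hmapsIco _ hfmapsIoo hfa
    have hfc2 : ContDiffOn ℝ 2 f (Ico a b) :=
      ψ.contDiff.comp (ψ.contDiff.mono hIcoS) fun t ht => ψ.mapsTo (hIcoS ht)
    have hflt : ∀ t ∈ Ioo a b, f t < t := by
      intro t ht
      have h1 : ψ.toFun t ∈ Ioo a b := hψmapsIoo ht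
      exact lt_trans (hψlt _ h1) (hψlt t ht)
    have hfmono : StrictMonoOn f (Ico a b) := fun u hu v hv huv =>
      ψ.mono (ψ.mapsTo (hIcoS hu)) (ψ.mapsTo (hIcoS hv)) (ψ.mono (hIcoS hu) (hIcoS hv) huv)
    have hcommfg : ∀ t ∈ Ico a b, g₀ (f t) = f (g₀ t) := by
      intro t ht
      have htS := hIcoS ht
      show χ.toFun (ψ.invFun (ψ.toFun (ψ.toFun t))) =
        ψ.toFun (ψ.toFun (χ.toFun (ψ.invFun t)))
      rw [ψ.left_inv (ψ.toFun t) (ψ.mapsTo htS)]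
      conv_lhs => rw [← ψ.right_inv t htS]
      exact hkeyχ _ (ψ.mapsTo_inv htS)
    have hedif : DifferentiableOn ℝ (fun t => ψ.invFun (ψ.invFun t)) (Ico a b) :=
      (((ψ.contDiff_inv.of_le one_le_two).comp
        ((ψ.contDiff_inv.of_le one_le_two).mono hIcoS)
        fun t ht => ψ.mapsTo_inv (hIcoS ht)).differentiableOn one_ne_zero)
    have hef : ∀ t ∈ Ico a b, (fun t => ψ.invFun (ψ.invFun t)) (f t) = t := by
      intro t ht
      have htS := hIcoS ht
      show ψ.invFun (ψ.invFun (ψ.toFun (ψ.toFun t))) = t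
      rw [ψ.left_inv (ψ.toFun t) (ψ.mapsTo htS), ψ.left_inv t htS]
    have hf'pos := derivWithin_pos_of_leftInv hab hfmaps
      (hfc2.differentiableOn two_ne_zero) hedif hef hfmono
    have hgid := kopell hab hfmaps hg₀maps hfc2 hg₀cd hfa hg₀a hflt hfmono hg₀mono
      hcommfg hf'pos hz₁I hg₀z
    have hψyI : ψ.toFun y ∈ Ioo a b := hψmapsIoo ⟨hay, hyb⟩
    have h := hgid _ (Ioo_subset_Ico_self hψyI)
    have h2 : χ.toFun (ψ.invFun (ψ.toFun y)) = ψ.toFun y := h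
    rwa [ψ.left_inv y hy] at h2
  · -- ψ > id on the component : f = ψ⁻²
    have hψinvlt : ∀ t ∈ Ioo a b, ψ.invFun t < t := by
      intro t ht
      have h1 : ψ.invFun t ∈ Ioo a b := hψinvmapsIoo ht
      have h2 := hψgt _ h1
      rwa [ψ.right_inv t (hIooS ht)] at h2
    set f := fun t => ψ.invFun (ψ.invFun t) with hf
    have hfa : f a = a := by show ψ.invFun (ψ.invFun a) = a; rw [hψinva, hψinva]
    have hfmapsIoo : MapsTo f (Ioo a b) (Ioo a b) := fun t ht =>
      hψinvmapsIoo (hψinvmapsIoo ht)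
    have hfmaps : MapsTo f (Ico a b) (Ico a b) := hmapsIco _ hfmapsIoo hfa
    have hfc2 : ContDiffOn ℝ 2 f (Ico a b) :=
      ψ.contDiff_inv.comp (ψ.contDiff_inv.mono hIcoS) fun t ht => ψ.mapsTo_inv (hIcoS ht)
    have hflt : ∀ t ∈ Ioo a b, f t < t := by
      intro t ht
      have h1 : ψ.invFun t ∈ Ioo a b := hψinvmapsIoo ht
      exact lt_trans (hψinvlt _ h1) (hψinvlt t ht)
    have hfmono : StrictMonoOn f (Ico a b) := fun u hu v hv huv =>
      ψ.mono_inv (ψ.mapsTo_inv (hIcoS hu)) (ψ.mapsTo_inv (hIcoS hv))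
        (ψ.mono_inv (hIcoS hu) (hIcoS hv) huv)
    have hkeyχinv : ∀ u ∈ Ico (0:ℝ) 1,
        χ.toFun (ψ.invFun (ψ.invFun u)) = ψ.invFun (ψ.invFun (χ.toFun u)) := by
      intro u hu
      have h1 : ψ.invFun u ∈ Ico (0:ℝ) 1 := ψ.mapsTo_inv hu
      have h2 : ψ.invFun (ψ.invFun u) ∈ Ico (0:ℝ) 1 := ψ.mapsTo_inv h1
      have h3 := hkeyχ _ h2
      rw [ψ.right_inv _ h1, ψ.right_inv u hu] at h3
      have h4 : χ.toFun (ψ.invFun (ψ.invFun u)) ∈ Ico (0:ℝ) 1 := χ.mapsTo h2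
      rw [h3, ψ.left_inv _ (ψ.mapsTo h4), ψ.left_inv _ h4]
    have hcommfg : ∀ t ∈ Ico a b, g₀ (f t) = f (g₀ t) := by
      intro t ht
      have htS := hIcoS ht
      show χ.toFun (ψ.invFun (ψ.invFun (ψ.invFun t))) =
        ψ.invFun (ψ.invFun (χ.toFun (ψ.invFun t)))
      exact hkeyχinv _ (ψ.mapsTo_inv htS)
    have hedif : DifferentiableOn ℝ (fun t => ψ.toFun (ψ.toFun t)) (Ico a b) :=
      (((ψ.contDiff.of_le one_le_two).comp
        ((ψ.contDiff.of_le one_le_two).mono hIcoS)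
        fun t ht => ψ.mapsTo (hIcoS ht)).differentiableOn one_ne_zero)
    have hef : ∀ t ∈ Ico a b, (fun t => ψ.toFun (ψ.toFun t)) (f t) = t := by
      intro t ht
      have htS := hIcoS ht
      show ψ.toFun (ψ.toFun (ψ.invFun (ψ.invFun t))) = t
      rw [ψ.right_inv (ψ.invFun t) (ψ.mapsTo_inv htS), ψ.right_inv t htS]
    have hf'pos := derivWithin_pos_of_leftInv hab hfmaps
      (hfc2.differentiableOn two_ne_zero) hedif hef hfmono
    have hgid := kopell hab hfmaps hg₀maps hfc2 hg₀cd hfa hg₀a hflt hfmono hg₀mono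
      hcommfg hf'pos hz₁I hg₀z
    have hψyI : ψ.toFun y ∈ Ioo a b := hψmapsIoo ⟨hay, hyb⟩
    have h := hgid _ (Ioo_subset_Ico_self hψyI)
    have h2 : χ.toFun (ψ.invFun (ψ.toFun y)) = ψ.toFun y := h
    rwa [ψ.left_inv y hy] at h2

/-- Kopell–Szekeres corollary: if a `C²` diffeomorphism `φ` of `[0,1)` commutes
with `ψ²`, then it commutes with `ψ`. -/
theorem commutes_with_sq_implies_commutes (ψ φ : DiffeoIcoTwo)
    (hcomm : ∀ x ∈ Set.Ico (0:ℝ) 1,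
      φ.toFun (ψ.toFun (ψ.toFun x)) = ψ.toFun (ψ.toFun (φ.toFun x))) :
    ∀ x ∈ Set.Ico (0:ℝ) 1, φ.toFun (ψ.toFun x) = ψ.toFun (φ.toFun x) := by
  set χd : DiffeoIcoTwo :=
    { toFun := fun x => φ.toFun (ψ.toFun (φ.invFun x))
      invFun := fun x => φ.toFun (ψ.invFun (φ.invFun x))
      mapsTo := fun x hx => φ.mapsTo (ψ.mapsTo (φ.mapsTo_inv hx))
      mapsTo_inv := fun x hx => φ.mapsTo (ψ.mapsTo_inv (φ.mapsTo_inv hx))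
      left_inv := by
        intro x hx
        have h1 := φ.mapsTo_inv hx
        have h2 := ψ.mapsTo h1
        show φ.toFun (ψ.invFun (φ.invFun (φ.toFun (ψ.toFun (φ.invFun x))))) = x
        rw [φ.left_inv _ h2, ψ.left_inv _ h1, φ.right_inv _ hx]
      right_inv := by
        intro x hx
        have h1 := φ.mapsTo_inv hx
        have h2 := ψ.mapsTo_inv h1
        show φ.toFun (ψ.toFun (φ.invFun (φ.toFun (ψ.invFun (φ.invFun x))))) = x
        rw [φ.left_inv _ h2, ψ.right_inv _ h1, φ.right_inv _ hx]
      fixes_zero := by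
        show φ.toFun (ψ.toFun (φ.invFun 0)) = 0
        rw [φ.inv_fixes_zero, ψ.fixes_zero, φ.fixes_zero]
      contDiff := φ.contDiff.comp (ψ.contDiff.comp φ.contDiff_inv φ.mapsTo_inv)
        fun x hx => ψ.mapsTo (φ.mapsTo_inv hx)
      contDiff_inv := φ.contDiff.comp (ψ.contDiff_inv.comp φ.contDiff_inv φ.mapsTo_inv)
        fun x hx => ψ.mapsTo_inv (φ.mapsTo_inv hx) } with hχd
  have hsq : ∀ x ∈ Ico (0:ℝ) 1, χd.toFun (χd.toFun x) = ψ.toFun (ψ.toFun x) := by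
    intro x hx
    have h1 := φ.mapsTo_inv hx
    have h2 := ψ.mapsTo h1
    show φ.toFun (ψ.toFun (φ.invFun (φ.toFun (ψ.toFun (φ.invFun x))))) =
      ψ.toFun (ψ.toFun x)
    rw [φ.left_inv _ h2, hcomm _ h1, φ.right_inv x hx]
  have hall := sq_unique ψ χd hsq
  intro x hx
  have h := hall (φ.toFun x) (φ.mapsTo hx)
  have h2 : χd.toFun (φ.toFun x) = φ.toFun (ψ.toFun (φ.invFun (φ.toFun x))) := rfl
  rw [h2, φ.left_inv x hx] at h
  exact h
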